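/- arXiv:1102.2101 — 2 statements merged into one kernel-verified Lean document; each statement's English description precedes it below -/
import Mathlib

section
/- Let L be the τ-pinball loss and Q a probability measure with support in [−1,1]. With t*_min the minimum of the τ-quantile set of Q and q_− := Q([t*_min,∞)) − (1−τ), for all t ≥ 0 the excess inner risk satisfies C_Q(t*_min − t) − C*_Q = t·q_− + ∫_0^t Q((t*_min − s, t*_min)) ds. -/
open MeasureTheory Set

/-- The τ-pinball loss. -/
noncomputable def pinball (τ y t : ℝ) : ℝ := if y < t then (1 - τ) * (t - y) else τ * (y - t)

/-- The τ-quantile set F*_τ(Q). -/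
def quantileSet (Q : Measure ℝ) (τ : ℝ) : Set ℝ :=
  {t | τ ≤ (Q (Set.Iic t)).toReal ∧ 1 - τ ≤ (Q (Set.Ici t)).toReal}

noncomputable def tqmin (Q : Measure ℝ) (τ : ℝ) : ℝ := sInf (quantileSet Q τ)
noncomputable def tqmax (Q : Measure ℝ) (τ : ℝ) : ℝ := sSup (quantileSet Q τ)

/-- The inner pinball risk C_Q(t). -/
noncomputable def innerRisk (Q : Measure ℝ) (τ t : ℝ) : ℝ := ∫ y, pinball τ y t ∂Q

/-- `Q` has a τ-quantile of type `q` with constants `α ∈ (0,2]` and `b > 0`. -/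
noncomputable def quantileTypeQ (Q : Measure ℝ) (τ q α b : ℝ) : Prop :=
  (1 < q ∧ α ∈ Set.Ioc (0:ℝ) 2 ∧ 0 < b ∧
    ∀ s ∈ Set.Icc (0:ℝ) α,
      b * s ^ (q - 1) ≤ (Q (Set.Ioo (tqmin Q τ - s) (tqmin Q τ))).toReal ∧
      b * s ^ (q - 1) ≤ (Q (Set.Ioo (tqmax Q τ) (tqmax Q τ + s))).toReal)
  ∨ (q = 1 ∧ α = 2 ∧ 0 < (Q {tqmin Q τ}).toReal ∧ 0 < (Q {tqmax Q τ}).toReal ∧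
      b = (if tqmin Q τ ≠ tqmax Q τ
            then min (Q {tqmin Q τ}).toReal (Q {tqmax Q τ}).toReal
            else min (τ - (Q (Set.Iio (tqmin Q τ))).toReal)
                     ((Q (Set.Iic (tqmax Q τ))).toReal - τ)))

section Aux

lemma pinball_eq (τ y t : ℝ) : pinball τ y t = τ * (y - t) + max (t - y) 0 := by
  unfold pinball
  split_ifs with h
  · rw [max_eq_left (by linarith)]; ring
  · rw [max_eq_right (by linarith [not_lt.mp h])]; ring

variable (Q : Measure ℝ) [IsProbabilityMeasure Q]

lemma integrable_id' (hsupp : Q (Set.Icc (-1:ℝ) 1)ᶜ = 0) : Integrable (fun y : ℝ => y) Q := by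
  refine (integrable_const (1:ℝ)).mono' measurable_id.aestronglyMeasurable ?_
  rw [ae_iff]
  refine measure_mono_null ?_ hsupp
  intro y hy
  simp only [Real.norm_eq_abs, not_le, mem_setOf_eq] at hy
  simp only [mem_compl_iff, mem_Icc, not_and_or, not_le]
  rcases lt_abs.mp hy with h | h
  · right; linarith
  · left; linarith

lemma integrable_pinball (hid : Integrable (fun y : ℝ => y) Q) (τ t : ℝ) :
    Integrable (fun y => pinball τ y t) Q := by
  have h1 : Integrable (fun y : ℝ => max (t - y) 0) Q := ((integrable_const t).sub hid).pos_part
  have h2 : Integrable (fun y : ℝ => τ * (y - t)) Q :=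
    (hid.sub (integrable_const t)).const_mul τ
  have := h2.add h1
  simp only [pinball_eq]; exact this

lemma max_sub_max (a b y : ℝ) (hab : a ≤ b) :
    max (b - y) 0 - max (a - y) 0
      = ∫ s in a..b, (Set.Ioi y).indicator (fun _ => (1:ℝ)) s := by
  rw [intervalIntegral.integral_of_le hab, setIntegral_indicator measurableSet_Ioi,
    setIntegral_const, Ioc_inter_Ioi, smul_eq_mul, mul_one, Real.volume_real_Ioc]
  rcases le_total y a with h | h
  · rw [sup_eq_left.mpr h, max_eq_left (show (0:ℝ) ≤ b - y by linarith),
      max_eq_left (show (0:ℝ) ≤ a - y by linarith),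
      max_eq_left (show (0:ℝ) ≤ b - a by linarith)]
    ring
  · rw [sup_eq_right.mpr h, show max (a - y) 0 = 0 from max_eq_right (by linarith)]
    ring

lemma fubini_ind (a b : ℝ) (hab : a ≤ b) :
    ∫ y, (∫ s in a..b, (Set.Ioi y).indicator (fun _ => (1:ℝ)) s) ∂Q
      = ∫ s in a..b, (Q (Set.Iio s)).toReal := by
  have hfin : Fact (volume (Set.Ioc a b) < ⊤) :=
    ⟨by rw [Real.volume_Ioc]; exact ENNReal.ofReal_lt_top⟩
  simp only [intervalIntegral.integral_of_le hab]
  have hmeas : MeasurableSet {p : ℝ × ℝ | p.1 < p.2} :=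
    measurableSet_lt measurable_fst measurable_snd
  have huncurry : Function.uncurry (fun y s => (Set.Ioi y).indicator (fun _ => (1:ℝ)) s)
      = {p : ℝ × ℝ | p.1 < p.2}.indicator (fun _ => (1:ℝ)) := by
    funext p
    simp only [Function.uncurry, Set.indicator, Set.mem_Ioi, Set.mem_setOf_eq]
  have hint : Integrable
      (Function.uncurry (fun y s => (Set.Ioi y).indicator (fun _ => (1:ℝ)) s))
      (Q.prod (volume.restrict (Set.Ioc a b))) := by
    rw [huncurry]
    exact (integrable_const (1:ℝ)).indicator hmeas
  rw [MeasureTheory.integral_integral_swap hint]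
  refine setIntegral_congr_fun measurableSet_Ioc ?_
  intro s _
  show ∫ y, (Set.Ioi y).indicator (fun _ => (1:ℝ)) s ∂Q = (Q (Set.Iio s)).toReal
  have : (fun y => (Set.Ioi y).indicator (fun _ => (1:ℝ)) s)
      = (Set.Iio s).indicator (fun _ => (1:ℝ)) := by
    funext y
    simp only [Set.indicator, Set.mem_Ioi, Set.mem_Iio]
  rw [this, integral_indicator_const _ measurableSet_Iio, smul_eq_mul, mul_one, measureReal_def]

lemma risk_diff (hsupp : Q (Set.Icc (-1:ℝ) 1)ᶜ = 0) (τ a b : ℝ) (hab : a ≤ b) :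
    innerRisk Q τ b - innerRisk Q τ a
      = ∫ s in a..b, ((Q (Set.Iio s)).toReal - τ) := by
  have hid := integrable_id' Q hsupp
  have hmax : Integrable (fun y : ℝ => max (b - y) 0 - max (a - y) 0) Q :=
    ((integrable_const b).sub hid).pos_part.sub ((integrable_const a).sub hid).pos_part
  have hG : IntervalIntegrable (fun s => (Q (Set.Iio s)).toReal) volume a b := by
    apply MonotoneOn.intervalIntegrable
    intro x _ y _ hxy
    exact ENNReal.toReal_mono (measure_ne_top _ _)
      (measure_mono (Set.Iio_subset_Iio hxy))
  have step1 : innerRisk Q τ b - innerRisk Q τ a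
      = ∫ y, ((max (b - y) 0 - max (a - y) 0) + τ * (a - b)) ∂Q := by
    unfold innerRisk
    rw [← integral_sub (integrable_pinball Q hid τ b) (integrable_pinball Q hid τ a)]
    refine integral_congr_ae (Filter.Eventually.of_forall fun y => ?_)
    show pinball τ y b - pinball τ y a = _
    rw [pinball_eq, pinball_eq]
    ring
  rw [step1, integral_add hmax (integrable_const _), integral_const,
    probReal_univ, one_smul]
  have step2 : ∫ y, (max (b - y) 0 - max (a - y) 0) ∂Q
      = ∫ s in a..b, (Q (Set.Iio s)).toReal := by
    rw [← fubini_ind Q a b hab]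
    refine integral_congr_ae (Filter.Eventually.of_forall fun y => ?_)
    exact max_sub_max a b y hab

  rw [step2, intervalIntegral.integral_sub hG intervalIntegrable_const,
    intervalIntegral.integral_const, smul_eq_mul]
  ring

end Aux

section Quantile

variable (Q : Measure ℝ) [IsProbabilityMeasure Q]

lemma Iio_Ici_toReal (x : ℝ) :
    (Q (Set.Iio x)).toReal + (Q (Set.Ici x)).toReal = 1 := by
  have h := measure_add_measure_compl (μ := Q) (measurableSet_Iio (a := x))
  rw [compl_Iio, measure_univ] at h
  rw [← ENNReal.toReal_add (measure_ne_top _ _) (measure_ne_top _ _), h, ENNReal.toReal_one]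

lemma tqmin_mem (τ : ℝ) (hτ : τ ∈ Set.Ioo (0:ℝ) 1)
    (hsupp : Q (Set.Icc (-1:ℝ) 1)ᶜ = 0) : tqmin Q τ ∈ quantileSet Q τ := by
  set A : Set ℝ := {s | τ ≤ (Q (Set.Iic s)).toReal} with hA
  have hQIic1 : Q (Set.Iic 1) = 1 := by
    have h0 : Q (Set.Ioi (1:ℝ)) = 0 := by
      refine measure_mono_null ?_ hsupp
      intro x hx
      simp only [mem_Ioi] at hx
      simp only [mem_compl_iff, mem_Icc, not_and_or, not_le]
      right; exact hx
    have h := measure_add_measure_compl (μ := Q) (measurableSet_Iic (a := (1:ℝ)))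
    rw [compl_Iic, h0, add_zero, measure_univ] at h
    exact h
  have h1mem : (1:ℝ) ∈ A := by
    simp only [hA, mem_setOf_eq, hQIic1, ENNReal.toReal_one]
    exact hτ.2.le
  have hlb : ∀ s ∈ A, (-1:ℝ) ≤ s := by
    intro s hs
    by_contra hlt
    push_neg at hlt
    have h0 : Q (Set.Iic s) = 0 := by
      refine measure_mono_null ?_ hsupp
      intro x hx
      simp only [mem_Iic] at hx
      simp only [mem_compl_iff, mem_Icc, not_and_or, not_le]
      left; linarith
    simp only [hA, mem_setOf_eq, h0, ENNReal.toReal_zero] at hs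
    linarith [hτ.1]
  have hAne : A.Nonempty := ⟨1, h1mem⟩
  have hAbdd : BddBelow A := ⟨-1, hlb⟩
  set u := sInf A with hu
  -- Right continuity: τ ≤ F u
  have hFu : τ ≤ (Q (Set.Iic u)).toReal := by
    have hinter : ⋂ n : ℕ, Set.Iic (u + 1/(n+1)) = Set.Iic u := by
      ext x
      simp only [mem_iInter, mem_Iic]
      constructor
      · intro h
        by_contra hx
        push_neg at hx
        obtain ⟨n, hn⟩ := exists_nat_one_div_lt (show (0:ℝ) < x - u by linarith)
        have := h n
        linarith
      · intro h n
        have : (0:ℝ) ≤ 1/(n+1) := by positivity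
        linarith
    have htend : Filter.Tendsto (fun n : ℕ => Q (Set.Iic (u + 1/(n+1)))) Filter.atTop
        (nhds (Q (Set.Iic u))) := by
      have := tendsto_measure_iInter_atTop (μ := Q)
        (s := fun n : ℕ => Set.Iic (u + 1/(n+1)))
        (fun n => (measurableSet_Iic).nullMeasurableSet)
        (fun n m hnm => by
          apply Iic_subset_Iic.mpr
          have h1 : (1:ℝ)/(m+1) ≤ 1/(n+1) := by
            apply one_div_le_one_div_of_le (by positivity)
            exact_mod_cast by omega
          linarith)
        ⟨0, measure_ne_top _ _⟩
      rwa [hinter] at this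
    have hev : ∀ n : ℕ, ENNReal.ofReal τ ≤ Q (Set.Iic (u + 1/(n+1))) := by
      intro n
      have hlt : u < u + 1/(n+1) := by
        have : (0:ℝ) < 1/(n+1) := by positivity
        linarith
      obtain ⟨v, hvA, hv⟩ := exists_lt_of_csInf_lt hAne hlt
      have : τ ≤ (Q (Set.Iic (u + 1/(n+1)))).toReal :=
        le_trans hvA (ENNReal.toReal_mono (measure_ne_top _ _)
          (measure_mono (Iic_subset_Iic.mpr hv.le)))
      exact ENNReal.ofReal_le_of_le_toReal this
    have := ge_of_tendsto' htend hev
    rw [← ENNReal.ofReal_le_iff_le_toReal (measure_ne_top _ _)]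
    exact this
  -- Left limit: Q (Iio u) ≤ ofReal τ
  have hGu : Q (Set.Iio u) ≤ ENNReal.ofReal τ := by
    have hunion : ⋃ n : ℕ, Set.Iic (u - 1/(n+1)) = Set.Iio u := by
      ext x
      simp only [mem_iUnion, mem_Iic, mem_Iio]
      constructor
      · rintro ⟨n, hn⟩
        have : (0:ℝ) < 1/(n+1) := by positivity
        linarith
      · intro h
        obtain ⟨n, hn⟩ := exists_nat_one_div_lt (show (0:ℝ) < u - x by linarith)
        exact ⟨n, by linarith⟩
    have hmono : Monotone (fun n : ℕ => Set.Iic (u - 1/(n+1))) := by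
      intro n m hnm
      apply Iic_subset_Iic.mpr
      have h1 : (1:ℝ)/(m+1) ≤ 1/(n+1) := by
        apply one_div_le_one_div_of_le (by positivity)
        exact_mod_cast by omega
      linarith
    rw [← hunion, hmono.measure_iUnion]
    apply iSup_le
    intro n
    have hnotmem : u - 1/(n+1) ∉ A := by
      apply notMem_of_lt_csInf _ hAbdd
      have : (0:ℝ) < 1/(n+1) := by positivity
      rw [← hu]; linarith
    simp only [hA, mem_setOf_eq, not_le] at hnotmem
    rw [ENNReal.le_ofReal_iff_toReal_le (measure_ne_top _ _) hτ.1.le]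
    exact hnotmem.le
  have humem : u ∈ quantileSet Q τ := by
    constructor
    · exact hFu
    · have h1 : (Q (Set.Iio u)).toReal ≤ τ := by
        have := ENNReal.toReal_mono (by simp) hGu
        rwa [ENNReal.toReal_ofReal hτ.1.le] at this
      have h2 := Iio_Ici_toReal Q u
      linarith
  have hqbdd : BddBelow (quantileSet Q τ) := ⟨-1, fun v hv => hlb v hv.1⟩
  have h1 : tqmin Q τ ≤ u := csInf_le hqbdd humem
  have h2 : u ≤ tqmin Q τ := le_csInf ⟨u, humem⟩ (fun v hv => csInf_le hAbdd hv.1)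
  have : tqmin Q τ = u := le_antisymm h1 h2
  rw [this]
  exact humem

lemma innerRisk_min (τ : ℝ) (hτ : τ ∈ Set.Ioo (0:ℝ) 1)
    (hsupp : Q (Set.Icc (-1:ℝ) 1)ᶜ = 0) :
    ∀ s, innerRisk Q τ (tqmin Q τ) ≤ innerRisk Q τ s := by
  have hmem := tqmin_mem Q τ hτ hsupp
  set m := tqmin Q τ with hm
  have hFm : τ ≤ (Q (Set.Iic m)).toReal := hmem.1
  have hGm : (Q (Set.Iio m)).toReal ≤ τ := by
    have := Iio_Ici_toReal Q m
    linarith [hmem.2]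
  intro s
  rcases le_total m s with h | h
  · have hd := risk_diff Q hsupp τ m s h
    have hpos : 0 ≤ ∫ x in m..s, ((Q (Set.Iio x)).toReal - τ) := by
      rw [intervalIntegral.integral_of_le h]
      apply setIntegral_nonneg measurableSet_Ioc
      intro x hx
      have : τ ≤ (Q (Set.Iio x)).toReal :=
        le_trans hFm (ENNReal.toReal_mono (measure_ne_top _ _)
          (measure_mono (Iic_subset_Iio.mpr hx.1)))
      linarith
    linarith
  · have hd := risk_diff Q hsupp τ s m h
    have hneg : ∫ x in s..m, ((Q (Set.Iio x)).toReal - τ) ≤ 0 := by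
      rw [intervalIntegral.integral_of_le h]
      apply setIntegral_nonpos measurableSet_Ioc
      intro x hx
      have : (Q (Set.Iio x)).toReal ≤ (Q (Set.Iio m)).toReal :=
        ENNReal.toReal_mono (measure_ne_top _ _)
          (measure_mono (Iio_subset_Iio hx.2))
      linarith
    linarith

end Quantile

/-- Excess inner risk to the left of the quantile interval:
`C_Q(t*_min − t) − C*_Q = t·q₋ + ∫₀ᵗ Q((t*_min−s, t*_min)) ds` with
`q₋ = Q([t*_min,∞)) − (1−τ)`. -/
theorem stmt8 (τ : ℝ) (hτ : τ ∈ Set.Ioo (0:ℝ) 1) (Q : Measure ℝ) [IsProbabilityMeasure Q]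
    (hsupp : Q (Set.Icc (-1:ℝ) 1)ᶜ = 0) :
    ∀ t : ℝ, 0 ≤ t →
      innerRisk Q τ (tqmin Q τ - t) - (⨅ s : ℝ, innerRisk Q τ s)
        = t * ((Q (Set.Ici (tqmin Q τ))).toReal - (1 - τ))
          + ∫ s in (0:ℝ)..t, (Q (Set.Ioo (tqmin Q τ - s) (tqmin Q τ))).toReal := by
  intro t ht
  have hmin := innerRisk_min Q τ hτ hsupp
  set m := tqmin Q τ with hm
  have hinf : (⨅ s : ℝ, innerRisk Q τ s) = innerRisk Q τ m := by
    refine le_antisymm ?_ (le_ciInf hmin)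
    exact ciInf_le ⟨innerRisk Q τ m, by rintro x ⟨s, rfl⟩; exact hmin s⟩ m
  rw [hinf]
  -- LHS as an interval integral
  have heq1 : innerRisk Q τ (m - t) - innerRisk Q τ m
      = ∫ x in (m - t)..m, (τ - (Q (Set.Iio x)).toReal) := by
    have hd := risk_diff Q hsupp τ (m - t) m (by linarith)
    have hneg : ∫ x in (m - t)..m, (τ - (Q (Set.Iio x)).toReal)
        = -∫ x in (m - t)..m, ((Q (Set.Iio x)).toReal - τ) := by
      rw [← intervalIntegral.integral_neg]
      apply intervalIntegral.integral_congr
      intro x _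
      ring
    rw [hneg]
    linarith
  have heq2 : ∫ s in (0:ℝ)..t, (τ - (Q (Set.Iio (m - s))).toReal)
      = ∫ x in (m - t)..m, (τ - (Q (Set.Iio x)).toReal) := by
    have := intervalIntegral.integral_comp_sub_left (a := (0:ℝ)) (b := t)
      (fun x => τ - (Q (Set.Iio x)).toReal) m
    simpa using this
  set c : ℝ := (Q (Set.Ici m)).toReal - (1 - τ) with hc
  have hcval : c = τ - (Q (Set.Iio m)).toReal := by
    have := Iio_Ici_toReal Q m
    rw [hc]; linarith
  -- a.e. pointwise identity on (0, t]
  have hDcount : Set.Countable ((fun x : ℝ => m - x) '' {x : ℝ | 0 < Q {x}}) := by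
    have h1 : {x : ℝ | 0 < Q {x}} = {x : ℝ | 0 < Q {a : ℝ | a = x}} := by
      simp only [setOf_eq_eq_singleton]
    exact (h1 ▸ Measure.countable_meas_level_set_pos measurable_id).image _
  have hD0 : ∀ᵐ s : ℝ ∂volume, s ∉ ((fun x : ℝ => m - x) '' {x : ℝ | 0 < Q {x}}) := by
    rw [ae_iff]
    simp only [not_not]
    rw [Set.setOf_mem_eq]
    exact hDcount.measure_zero _
  have hae : ∀ᵐ s : ℝ ∂volume, s ∈ Set.uIoc (0:ℝ) t →
      (τ - (Q (Set.Iio (m - s))).toReal)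
        = c + (Q (Set.Ioo (m - s) m)).toReal := by
    filter_upwards [hD0] with s hsD hsI
    rw [Set.uIoc_of_le ht] at hsI
    have hs0 : 0 < s := hsI.1
    have hatom : Q {m - s} = 0 := by
      by_contra h
      exact hsD ⟨m - s, by simpa [pos_iff_ne_zero] using h, by ring⟩
    have hlt : m - s < m := by linarith
    -- Q (Ico (m-s) m) = Q (Ioo (m-s) m)
    have hIco : Q (Set.Ico (m - s) m) = Q (Set.Ioo (m - s) m) := by
      refine le_antisymm ?_ (measure_mono Set.Ioo_subset_Ico_self)
      calc Q (Set.Ico (m - s) m) = Q ({m - s} ∪ Set.Ioo (m - s) m) := by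
            rw [← Set.insert_eq, Set.Ioo_insert_left hlt]
        _ ≤ Q {m - s} + Q (Set.Ioo (m - s) m) := measure_union_le _ _
        _ = Q (Set.Ioo (m - s) m) := by rw [hatom, zero_add]
    have hdisj : Disjoint (Set.Iio (m - s)) (Set.Ico (m - s) m) := by
      rw [Set.disjoint_left]
      intro x hx hx'
      exact absurd hx'.1 (not_le.mpr hx)
    have hsplit : Q (Set.Iio m) = Q (Set.Iio (m - s)) + Q (Set.Ico (m - s) m) := by
      rw [← measure_union hdisj measurableSet_Ico, Set.Iio_union_Ico_eq_Iio hlt.le]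
    have hsplit' : (Q (Set.Iio m)).toReal
        = (Q (Set.Iio (m - s))).toReal + (Q (Set.Ioo (m - s) m)).toReal := by
      rw [hsplit, hIco, ENNReal.toReal_add (measure_ne_top _ _) (measure_ne_top _ _)]
    rw [hcval]
    linarith
  have hIoo : IntervalIntegrable (fun s => (Q (Set.Ioo (m - s) m)).toReal) volume 0 t := by
    apply MonotoneOn.intervalIntegrable
    intro x _ y _ hxy
    exact ENNReal.toReal_mono (measure_ne_top _ _)
      (measure_mono (Set.Ioo_subset_Ioo (by linarith) le_rfl))
  calc innerRisk Q τ (m - t) - innerRisk Q τ m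
      = ∫ x in (m - t)..m, (τ - (Q (Set.Iio x)).toReal) := heq1
    _ = ∫ s in (0:ℝ)..t, (τ - (Q (Set.Iio (m - s))).toReal) := heq2.symm
    _ = ∫ s in (0:ℝ)..t, (c + (Q (Set.Ioo (m - s) m)).toReal) :=
        intervalIntegral.integral_congr_ae hae
    _ = t * c + ∫ s in (0:ℝ)..t, (Q (Set.Ioo (m - s) m)).toReal := by
        rw [intervalIntegral.integral_add intervalIntegrable_const hIoo,
          intervalIntegral.integral_const, smul_eq_mul, sub_zero]
end

section
/- Let L be the τ-pinball loss and Q a probability measure on ℝ with support in [−1,1] having a τ-quantile of type q ∈ [1,∞) with constants α_Q ∈ (0,2] and b_Q > 0, and γ_Q = b_Q·α_Q^(q−1). Then for all ε ∈ [0,2], the self-calibration function satisfies δ(ε) := inf{C_Q(t) − C*_Q : dist(t, [t*_min,t*_max]) ≥ ε} ≥ q^(−1)·2^(1−q)·γ_Q·ε^q. -/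
open MeasureTheory Set
open Filter Topology

set_option linter.unusedSectionVars false
set_option maxHeartbeats 1000000

lemma pinball_nonneg {τ : ℝ} (h0 : 0 ≤ τ) (h1 : τ ≤ 1) (y t : ℝ) : 0 ≤ pinball τ y t := by
  unfold pinball; split <;> nlinarith

lemma pinball_meas (τ t : ℝ) : Measurable (fun y => pinball τ y t) := by
  unfold pinball
  exact Measurable.ite (measurableSet_Iio) (by fun_prop) (by fun_prop)

lemma ae_mem_Icc {P : Measure ℝ} (hsupp : P (Set.Icc (-1:ℝ) 1)ᶜ = 0) :
    ∀ᵐ y ∂P, y ∈ Icc (-1:ℝ) 1 := by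
  rw [ae_iff]
  have : {a : ℝ | ¬a ∈ Icc (-1:ℝ) 1} = (Icc (-1:ℝ) 1)ᶜ := rfl
  rw [this, hsupp]

lemma pinball_integrable {P : Measure ℝ} [IsProbabilityMeasure P]
    (hsupp : P (Set.Icc (-1:ℝ) 1)ᶜ = 0) (τ t : ℝ) :
    Integrable (fun y => pinball τ y t) P := by
  refine Integrable.mono' (integrable_const ((|τ|+1) * (|t|+1))) ((pinball_meas τ t).aestronglyMeasurable) ?_
  filter_upwards [ae_mem_Icc hsupp] with y hy
  obtain ⟨hy1, hy2⟩ := hy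
  have h1 : |y| ≤ 1 := abs_le.2 ⟨hy1, hy2⟩
  have h2 : -|t| ≤ t := neg_abs_le t
  have h3 : t ≤ |t| := le_abs_self t
  have h4 : -|τ| ≤ τ := neg_abs_le τ
  have h5 : τ ≤ |τ| := le_abs_self τ
  have h6 : 0 ≤ |τ| := abs_nonneg τ
  have h7 : 0 ≤ |t| := abs_nonneg t
  rw [Real.norm_eq_abs]
  unfold pinball
  split <;> rw [abs_le] <;> constructor <;> nlinarith [abs_le.1 h1]


lemma pinball_diff (τ c t y : ℝ) (hct : c ≤ t) :
    pinball τ y t - pinball τ y c =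
      (Ioi c).indicator (fun y => max (t - y) 0 - τ * (t - c)) y
        + (Iic c).indicator (fun _ => (1 - τ) * (t - c)) y := by
  simp only [Set.indicator_apply, mem_Ioi, mem_Iic]
  by_cases h : c < y
  · rw [if_pos h, if_neg (not_le.2 h)]
    unfold pinball
    rcases lt_or_ge y t with h2 | h2
    · rw [if_pos h2, if_neg (by linarith), max_eq_left (by linarith)]; ring
    · rw [if_neg (by linarith), if_neg (by linarith), max_eq_right (by linarith)]; ring
  · push_neg at h
    rw [if_neg (by simpa using h), if_pos h]
    unfold pinball
    rcases lt_or_ge y t with h2 | h2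
    · rcases lt_or_ge y c with h3 | h3
      · rw [if_pos h2, if_pos h3]; ring
      · have : y = c := le_antisymm h h3
        subst this
        rw [if_pos h2, if_neg (lt_irrefl y)]; ring
    · rw [if_neg (by linarith), if_neg (by linarith)]; nlinarith [le_antisymm (le_trans hct h2) h]

lemma max_integrableOn {P : Measure ℝ} [IsProbabilityMeasure P]
    (hsupp : P (Set.Icc (-1:ℝ) 1)ᶜ = 0) (c t : ℝ) :
    IntegrableOn (fun y => max (t - y) 0) (Ioi c) P := by
  refine Integrable.mono' (integrable_const (|t| + 1)) ((Continuous.max (by continuity) continuous_const).aestronglyMeasurable) ?_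
  filter_upwards [ae_restrict_of_ae (ae_mem_Icc hsupp)] with y hy
  obtain ⟨hy1, hy2⟩ := hy
  rw [Real.norm_eq_abs, abs_of_nonneg (le_max_right _ _)]
  rcases le_total (t - y) 0 with h | h
  · rw [max_eq_right h]; positivity
  · rw [max_eq_left h]
    have := le_abs_self t; linarith

lemma risk_diff_s11 {P : Measure ℝ} [IsProbabilityMeasure P]
    (hsupp : P (Set.Icc (-1:ℝ) 1)ᶜ = 0) (τ c t : ℝ) (hct : c ≤ t) :
    innerRisk P τ t - innerRisk P τ c
      = (t - c) * ((P (Iic c)).toReal - τ) + ∫ y in Ioi c, max (t - y) 0 ∂P := by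
  have hIio : MeasurableSet (Ioi c) := measurableSet_Ioi
  have hint : IntegrableOn (fun y => max (t - y) 0) (Ioi c) P := max_integrableOn hsupp c t
  have h1 : innerRisk P τ t - innerRisk P τ c
      = ∫ y, (pinball τ y t - pinball τ y c) ∂P := by
    rw [innerRisk, innerRisk, ← integral_sub (pinball_integrable hsupp τ t) (pinball_integrable hsupp τ c)]
  rw [h1]
  have h2 : ∀ y, pinball τ y t - pinball τ y c =
      (Ioi c).indicator (fun y => max (t - y) 0 - τ * (t - c)) y
        + (Iic c).indicator (fun _ => (1 - τ) * (t - c)) y := fun y => pinball_diff τ c t y hct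
  rw [integral_congr_ae (ae_of_all _ h2)]
  have hi1 : Integrable ((Ioi c).indicator (fun y => max (t - y) 0 - τ * (t - c))) P := by
    rw [integrable_indicator_iff hIio]
    exact hint.sub (integrableOn_const (measure_ne_top _ _))
  have hi2 : Integrable ((Iic c).indicator (fun _ : ℝ => (1 - τ) * (t - c))) P := by
    rw [integrable_indicator_iff measurableSet_Iic]
    exact integrableOn_const (measure_ne_top _ _)
  rw [integral_add hi1 hi2, integral_indicator hIio, integral_indicator measurableSet_Iic,
    integral_sub hint (integrableOn_const (measure_ne_top _ _)),
    setIntegral_const, setIntegral_const, measureReal_def, measureReal_def]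
  have hcompl : (P (Ioi c)).toReal = 1 - (P (Iic c)).toReal := by
    have := prob_compl_eq_one_sub (μ := P) (measurableSet_Iic (a := c))
    rw [compl_Iic] at this
    rw [this, ENNReal.toReal_sub_of_le (prob_le_one) ENNReal.one_ne_top, ENNReal.toReal_one]
  rw [hcompl]
  have hle : (P (Iic c)).toReal ≤ 1 := by
    simpa using ENNReal.toReal_mono ENNReal.one_ne_top (prob_le_one (μ := P) (s := Iic c))
  simp only [smul_eq_mul]
  ring


lemma layercake {P : Measure ℝ} [IsProbabilityMeasure P]
    (hsupp : P (Set.Icc (-1:ℝ) 1)ᶜ = 0) (c t : ℝ) :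
    ∫ y in Ioi c, max (t - y) 0 ∂P
      = ∫ s in Ioi (0:ℝ), (P (Ioo c (t - s))).toReal := by
  have hint : IntegrableOn (fun y => max (t - y) 0) (Ioi c) P := max_integrableOn hsupp c t
  rw [Integrable.integral_eq_integral_meas_lt hint (ae_of_all _ (fun y => le_max_right _ _))]
  apply setIntegral_congr_fun measurableSet_Ioi
  intro s hs
  simp only [mem_Ioi] at hs
  have hms : MeasurableSet {a : ℝ | s < max (t - a) 0} := by
    apply measurableSet_lt measurable_const
    exact (continuous_const.sub continuous_id).max continuous_const |>.measurable
  simp only []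
  rw [measureReal_def, Measure.restrict_apply hms]
  congr 2
  ext y
  simp only [mem_setOf_eq, mem_inter_iff, mem_Ioi, mem_Ioo]
  constructor
  · rintro ⟨h1, h2⟩
    refine ⟨h2, ?_⟩
    rcases le_total (t - y) 0 with h | h
    · rw [max_eq_right h] at h1; linarith
    · rw [max_eq_left h] at h1; linarith
  · rintro ⟨h1, h2⟩
    refine ⟨lt_of_lt_of_le (by linarith) (le_max_left _ _), h1⟩


lemma rpow_half_le_one {x q : ℝ} (hx : 0 ≤ x) (hx2 : x ≤ 2) (hq : 1 ≤ q) :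
    (2:ℝ)^(1-q) * x^(q-1) ≤ 1 := by
  have h2pos : (0:ℝ) < 2^(q-1) := Real.rpow_pos_of_pos (by norm_num) _
  have h21 : (2:ℝ)^(1-q) * (2:ℝ)^(q-1) = 1 := by
    rw [← Real.rpow_add (by norm_num)]; norm_num
  have key : (2:ℝ)^(1-q) * x^(q-1) = (x/2)^(q-1) := by
    rw [Real.div_rpow hx (by norm_num : (0:ℝ) ≤ 2), eq_div_iff (ne_of_gt h2pos)]
    linear_combination x^(q-1) * h21
  rw [key]
  exact Real.rpow_le_one (by positivity) (by linarith) (by linarith)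

lemma calc_bound (q α b ε : ℝ) (hq : 1 < q) (hb : 0 < b) (hα : 0 < α) (hα2 : α ≤ 2)
    (hε : 0 < ε) (hε2 : ε ≤ 2) :
    q⁻¹ * 2^(1-q) * (b * α^(q-1)) * ε^q ≤ ∫ u in (0:ℝ)..ε, b * (min u α)^(q-1) := by
  have hq0 : (0:ℝ) < q := by linarith
  have hrc : Continuous (fun x : ℝ => x ^ (q-1)) :=
    continuous_iff_continuousAt.2 fun x => Real.continuousAt_rpow_const x (q-1) (Or.inr (by linarith))
  have hcont : Continuous (fun u : ℝ => b * (min u α)^(q-1)) :=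
    continuous_const.mul (hrc.comp (continuous_id.min continuous_const))
  have ecomp : ∀ m : ℝ, 0 < m → m ≤ α →
      ∫ u in (0:ℝ)..m, b * (min u α)^(q-1) = b * (m^q / q) := by
    intro m hm hmα
    have e1 : ∫ u in (0:ℝ)..m, b * (min u α)^(q-1) = ∫ u in (0:ℝ)..m, b * u^(q-1) := by
      apply intervalIntegral.integral_congr
      intro u hu
      rw [uIcc_of_le (le_of_lt hm)] at hu
      simp only [min_eq_left (le_trans hu.2 hmα)]
    rw [e1, intervalIntegral.integral_const_mul, integral_rpow (Or.inl (by linarith))]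
    rw [show q - 1 + 1 = q by ring, Real.zero_rpow (by positivity), sub_zero]
  have hεpow : (0:ℝ) < ε ^ q := Real.rpow_pos_of_pos hε _
  have hαpow : (0:ℝ) < α ^ (q-1) := Real.rpow_pos_of_pos hα _
  rcases le_or_gt ε α with h | h
  · rw [ecomp ε hε h]
    have hpow : (2:ℝ)^(1-q) * α^(q-1) ≤ 1 := rpow_half_le_one (le_of_lt hα) hα2 (le_of_lt hq)
    calc q⁻¹ * 2^(1-q) * (b * α^(q-1)) * ε^q
        = (b * (ε^q / q)) * (2^(1-q) * α^(q-1)) := by ring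
      _ ≤ (b * (ε^q / q)) * 1 := by
          apply mul_le_mul_of_nonneg_left hpow (by positivity)
      _ = b * (ε^q / q) := by ring
  · have i1 : IntervalIntegrable (fun u => b*(min u α)^(q-1)) volume 0 α :=
      hcont.intervalIntegrable _ _
    have i2 : IntervalIntegrable (fun u => b*(min u α)^(q-1)) volume α ε :=
      hcont.intervalIntegrable _ _
    rw [← intervalIntegral.integral_add_adjacent_intervals i1 i2, ecomp α hα le_rfl]
    have e4 : ∫ u in α..ε, b * (min u α)^(q-1) = (ε - α) * (b * α^(q-1)) := by
      have : ∫ u in α..ε, b * (min u α)^(q-1) = ∫ u in α..ε, b * α^(q-1) := by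
        apply intervalIntegral.integral_congr
        intro u hu
        rw [uIcc_of_le (le_of_lt h)] at hu
        simp only [min_eq_right hu.1]
      rw [this, intervalIntegral.integral_const, smul_eq_mul]
    rw [e4]
    have hεq : ε^q = ε^(q-1) * ε := by
      rw [← Real.rpow_add_one (ne_of_gt hε) (q-1), sub_add_cancel]
    have hαq : α^q = α^(q-1) * α := by
      rw [← Real.rpow_add_one (ne_of_gt hα) (q-1), sub_add_cancel]
    have hpow : (2:ℝ)^(1-q) * ε^(q-1) ≤ 1 := rpow_half_le_one (le_of_lt hε) hε2 (le_of_lt hq)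
    have h2q : (0:ℝ) < 2^(1-q) := Real.rpow_pos_of_pos (by norm_num) _
    have hεpow1 : (0:ℝ) < ε ^ (q-1) := Real.rpow_pos_of_pos hε _
    -- LHS = q⁻¹ * (2^(1-q) * ε^(q-1)) * b * α^(q-1) * ε ≤ q⁻¹ * b * α^(q-1) * ε
    -- RHS = b * α^(q-1) * (α/q + ε - α) ≥ b * α^(q-1) * ε / q
    have step1 : q⁻¹ * 2^(1-q) * (b * α^(q-1)) * ε^q ≤ q⁻¹ * (b * α^(q-1)) * ε := by
      rw [hεq]
      have : q⁻¹ * 2^(1-q) * (b * α^(q-1)) * (ε^(q-1) * ε)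
          = (2^(1-q) * ε^(q-1)) * (q⁻¹ * (b * α^(q-1)) * ε) := by ring
      rw [this]
      exact mul_le_of_le_one_left (by positivity) hpow
    have step2 : q⁻¹ * (b * α^(q-1)) * ε ≤ b * (α^q/q) + (ε - α) * (b * α^(q-1)) := by
      rw [hαq]
      have hiq : q⁻¹ * q = 1 := inv_mul_cancel₀ (ne_of_gt hq0)
      have hiq1 : q⁻¹ ≤ 1 := by
        rw [← inv_one]
        exact inv_anti₀ one_pos (le_of_lt hq)
      have hiq0 : 0 < q⁻¹ := by positivity
      rw [div_eq_mul_inv]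
      nlinarith [mul_nonneg (mul_nonneg (sub_nonneg.2 hiq1) (le_of_lt (mul_pos hb hαpow))) (le_of_lt (sub_pos.2 h))]
    linarith


lemma tail_bound {P : Measure ℝ} [IsProbabilityMeasure P]
    (hsupp : P (Set.Icc (-1:ℝ) 1)ᶜ = 0) (c t ε α b q : ℝ)
    (hq : 1 < q) (hb : 0 < b) (hα : 0 < α) (hα2 : α ≤ 2)
    (hε : 0 < ε) (hε2 : ε ≤ 2) (ht : c + ε ≤ t)
    (hmass : ∀ u ∈ Icc (0:ℝ) (min ε α), b * u^(q-1) ≤ (P (Ioo c (c+u))).toReal) :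
    q⁻¹ * 2^(1-q) * (b * α^(q-1)) * ε^q ≤ ∫ y in Ioi c, max (t - y) 0 ∂P := by
  rw [layercake hsupp c t]
  set Δ := t - c with hΔ
  have hΔε : ε ≤ Δ := by simp [hΔ]; linarith
  have hΔ0 : 0 < Δ := lt_of_lt_of_le hε hΔε
  set M : ℝ → ℝ := fun s => (P (Ioo c (t - s))).toReal with hMdef
  have hM_anti : Antitone M := by
    intro s1 s2 h12
    exact ENNReal.toReal_mono (measure_ne_top _ _)
      (measure_mono (Ioo_subset_Ioo_right (by linarith)))
  have hM_nonneg : ∀ s, 0 ≤ M s := fun s => ENNReal.toReal_nonneg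
  have hM_int : IntegrableOn M (Ioi (0:ℝ)) volume := by
    refine Integrable.mono' (g := (Ioc (0:ℝ) Δ).indicator (fun _ => (1:ℝ))) ?_
      (hM_anti.measurable.aestronglyMeasurable) ?_
    · rw [integrable_indicator_iff measurableSet_Ioc]
      refine integrableOn_const (LT.lt.ne ?_)
      refine lt_of_le_of_lt (Measure.restrict_apply_le _ _) ?_
      rw [Real.volume_Ioc]; exact ENNReal.ofReal_lt_top
    · filter_upwards [ae_restrict_mem measurableSet_Ioi] with s hs
      rw [Real.norm_eq_abs, abs_of_nonneg (hM_nonneg s)]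
      rw [Set.indicator_apply]
      rcases le_or_gt s Δ with h | h
      · rw [if_pos (show s ∈ Ioc (0:ℝ) Δ from ⟨hs, h⟩)]
        calc M s ≤ (P univ).toReal := ENNReal.toReal_mono (measure_ne_top _ _) (measure_mono (subset_univ _))
          _ = 1 := by simp
      · have hM0 : M s = 0 := by
          have he : Ioo c (t - s) = ∅ := Ioo_eq_empty (by simp only [hΔ] at h; push_neg; linarith)
          rw [hMdef]
          simp only [he, measure_empty, ENNReal.toReal_zero]
        rw [if_neg (by simp [mem_Ioc]; intro h'; linarith), hM0]
  set χ : ℝ → ℝ := (Ioo (Δ-ε) Δ).indicator (fun s => b * (min (Δ-s) α)^(q-1)) with hχdef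
  have hχ_nonneg : ∀ s, 0 ≤ χ s := by
    intro s
    apply indicator_nonneg
    intro x hx
    have h1 : (0:ℝ) ≤ min (Δ-x) α := le_min (by simp only [mem_Ioo] at hx; linarith [hx.2]) (le_of_lt hα)
    positivity
  have h_le : ∀ s ∈ Ioi (0:ℝ), χ s ≤ M s := by
    intro s hs
    by_cases hmem : s ∈ Ioo (Δ-ε) Δ
    · rw [hχdef, Set.indicator_apply, if_pos hmem]
      obtain ⟨h1, h2⟩ := hmem
      have hu0 : 0 < Δ - s := by linarith
      have huε : Δ - s < ε := by linarith
      have hu'mem : min (Δ-s) α ∈ Icc (0:ℝ) (min ε α) :=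
        ⟨le_min (le_of_lt hu0) (le_of_lt hα), min_le_min (le_of_lt huε) le_rfl⟩
      refine le_trans (hmass _ hu'mem) ?_
      apply ENNReal.toReal_mono (measure_ne_top _ _)
      apply measure_mono
      apply Ioo_subset_Ioo_right
      have hmin : min (Δ-s) α ≤ Δ - s := min_le_left _ _
      have hΔ' : Δ = t - c := rfl
      rw [hΔ'] at hmin
      linarith
    · rw [hχdef, Set.indicator_apply, if_neg hmem]
      exact hM_nonneg s
  have key : ∫ s in Ioi (0:ℝ), χ s ≤ ∫ s in Ioi (0:ℝ), M s := by
    apply integral_mono_of_nonneg (ae_of_all _ (fun s => hχ_nonneg s)) hM_int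
    filter_upwards [ae_restrict_mem measurableSet_Ioi] with s hs
    exact h_le s hs
  refine le_trans ?_ key
  have e1 : ∫ s in Ioi (0:ℝ), χ s = ∫ s in Ioo (Δ-ε) Δ, b * (min (Δ-s) α)^(q-1) := by
    rw [hχdef, integral_indicator measurableSet_Ioo, Measure.restrict_restrict measurableSet_Ioo,
      inter_eq_left.2 (fun s hs => by simp [mem_Ioo] at hs ⊢; linarith [hs.1])]
  have e2 : ∫ s in Ioo (Δ-ε) Δ, b * (min (Δ-s) α)^(q-1)
      = ∫ s in (Δ-ε)..Δ, b * (min (Δ-s) α)^(q-1) := by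
    rw [intervalIntegral.integral_of_le (by linarith), integral_Ioc_eq_integral_Ioo]
  have e3 : ∫ s in (Δ-ε)..Δ, b * (min (Δ-s) α)^(q-1) = ∫ u in (0:ℝ)..ε, b * (min u α)^(q-1) := by
    have := intervalIntegral.integral_comp_sub_left (a := Δ-ε) (b := Δ)
      (fun u => b * (min u α)^(q-1)) Δ
    simpa using this
  rw [e1, e2, e3]
  exact calc_bound q α b ε hq hb hα hα2 hε hε2


lemma tR_mono (P : Measure ℝ) [IsProbabilityMeasure P] {s v : Set ℝ} (h : s ⊆ v) :
    (P s).toReal ≤ (P v).toReal :=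
  ENNReal.toReal_mono (measure_ne_top _ _) (measure_mono h)

lemma tR_le_one (P : Measure ℝ) [IsProbabilityMeasure P] (s : Set ℝ) : (P s).toReal ≤ 1 := by
  calc (P s).toReal ≤ (P univ).toReal := tR_mono P (subset_univ _)
    _ = 1 := by simp

-- right continuity of the CDF at sInf of a set included in {t | τ ≤ F t}
lemma sInf_mem_cdf_le {P : Measure ℝ} [IsProbabilityMeasure P] {τ : ℝ} {A : Set ℝ} (hne : A.Nonempty) (hbdd : BddBelow A)
    (hA : ∀ x ∈ A, τ ≤ (P (Iic x)).toReal) :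
    τ ≤ (P (Iic (sInf A))).toReal := by
  set c := sInf A with hc
  have hIic : Iic c = ⋂ n : ℕ, Iic (c + 1/(n+1)) := by
    ext x
    simp only [mem_Iic, mem_iInter]
    constructor
    · intro h n
      have : (0:ℝ) < 1/(n+1) := by positivity
      linarith
    · intro h
      by_contra hx
      push_neg at hx
      obtain ⟨n, hn⟩ := exists_nat_one_div_lt (show (0:ℝ) < x - c by linarith)
      have := h n
      linarith
  have htend : Tendsto (fun n : ℕ => P (Iic (c + 1/(n+1)))) atTop (𝓝 (P (Iic c))) := by
    rw [hIic]
    exact tendsto_measure_iInter_atTop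
      (fun n => (measurableSet_Iic).nullMeasurableSet)
      (fun m n hmn => Iic_subset_Iic.2 (by
        have hmn' : (m:ℝ) ≤ n := Nat.cast_le.2 hmn
        have : (1:ℝ)/(n+1) ≤ 1/(m+1) := by
          apply one_div_le_one_div_of_le (by positivity)
          linarith
        linarith))
      ⟨0, measure_ne_top _ _⟩
  have htend' : Tendsto (fun n : ℕ => (P (Iic (c + 1/(n+1)))).toReal) atTop
      (𝓝 ((P (Iic c)).toReal)) :=
    (ENNReal.tendsto_toReal (measure_ne_top _ _)).comp htend
  refine ge_of_tendsto htend' (Eventually.of_forall fun n => ?_)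
  obtain ⟨x, hxA, hxlt⟩ := (csInf_lt_iff hbdd hne).1 (show c < c + 1/(n+1) by
    have : (0:ℝ) < 1/(n+1) := by positivity
    linarith)
  exact le_trans (hA x hxA) (tR_mono P (Iic_subset_Iic.2 (le_of_lt hxlt)))

lemma sSup_mem_cdf_ge {P : Measure ℝ} [IsProbabilityMeasure P] {τ : ℝ} {A : Set ℝ} (hne : A.Nonempty) (hbdd : BddAbove A)
    (hA : ∀ x ∈ A, 1 - τ ≤ (P (Ici x)).toReal) :
    1 - τ ≤ (P (Ici (sSup A))).toReal := by
  set d := sSup A with hd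
  have hIci : Ici d = ⋂ n : ℕ, Ici (d - 1/(n+1)) := by
    ext x
    simp only [mem_Ici, mem_iInter]
    constructor
    · intro h n
      have : (0:ℝ) < 1/(n+1) := by positivity
      linarith
    · intro h
      by_contra hx
      push_neg at hx
      obtain ⟨n, hn⟩ := exists_nat_one_div_lt (show (0:ℝ) < d - x by linarith)
      have := h n
      linarith
  have htend : Tendsto (fun n : ℕ => P (Ici (d - 1/(n+1)))) atTop (𝓝 (P (Ici d))) := by
    rw [hIci]
    exact tendsto_measure_iInter_atTop
      (fun n => (measurableSet_Ici).nullMeasurableSet)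
      (fun m n hmn => Ici_subset_Ici.2 (by
        have hmn' : (m:ℝ) ≤ n := Nat.cast_le.2 hmn
        have : (1:ℝ)/(n+1) ≤ 1/(m+1) := by
          apply one_div_le_one_div_of_le (by positivity)
          linarith
        linarith))
      ⟨0, measure_ne_top _ _⟩
  have htend' : Tendsto (fun n : ℕ => (P (Ici (d - 1/(n+1)))).toReal) atTop
      (𝓝 ((P (Ici d)).toReal)) :=
    (ENNReal.tendsto_toReal (measure_ne_top _ _)).comp htend
  refine ge_of_tendsto htend' (Eventually.of_forall fun n => ?_)
  obtain ⟨x, hxA, hxlt⟩ := (lt_csSup_iff hbdd hne).1 (show d - 1/(n+1) < d by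
    have : (0:ℝ) < 1/(n+1) := by positivity
    linarith)
  exact le_trans (hA x hxA) (tR_mono P (Ici_subset_Ici.2 (le_of_lt hxlt)))


lemma compl_toReal (P : Measure ℝ) [IsProbabilityMeasure P] {s : Set ℝ} (hs : MeasurableSet s) :
    (P sᶜ).toReal = 1 - (P s).toReal := by
  rw [prob_compl_eq_one_sub hs, ENNReal.toReal_sub_of_le prob_le_one ENNReal.one_ne_top,
    ENNReal.toReal_one]

lemma Iic_one_eq {P : Measure ℝ} [IsProbabilityMeasure P] (hsupp : P (Set.Icc (-1:ℝ) 1)ᶜ = 0) : (P (Iic (1:ℝ))).toReal = 1 := by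
  have h1 : P (Icc (-1:ℝ) 1) = 1 := by
    rwa [prob_compl_eq_zero_iff measurableSet_Icc] at hsupp
  refine le_antisymm (tR_le_one P _) ?_
  calc (1:ℝ) = (P (Icc (-1:ℝ) 1)).toReal := by rw [h1]; simp
    _ ≤ (P (Iic 1)).toReal := tR_mono P (fun x hx => hx.2)

lemma zero_of_lt_neg_one {P : Measure ℝ} (hsupp : P (Set.Icc (-1:ℝ) 1)ᶜ = 0) {t : ℝ} (ht : t < -1) :
    (P (Iic t)).toReal = 0 := by
  have : P (Iic t) = 0 := by
    apply measure_mono_null (fun x hx => ?_) hsupp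
    simp only [mem_Iic] at hx
    simp only [mem_compl_iff, mem_Icc, not_and_or, not_le]
    left; linarith
  rw [this]; simp

lemma Ici_zero_of_gt_one {P : Measure ℝ} (hsupp : P (Set.Icc (-1:ℝ) 1)ᶜ = 0) {t : ℝ} (ht : 1 < t) :
    (P (Ici t)).toReal = 0 := by
  have : P (Ici t) = 0 := by
    apply measure_mono_null (fun x hx => ?_) hsupp
    simp only [mem_Ici] at hx
    simp only [mem_compl_iff, mem_Icc, not_and_or, not_le]
    right; linarith
  rw [this]; simp

lemma quantileSet_subset {P : Measure ℝ} [IsProbabilityMeasure P] {τ : ℝ} (hsupp : P (Set.Icc (-1:ℝ) 1)ᶜ = 0) (hτ0 : 0 < τ) (hτ1 : τ < 1) :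
    quantileSet P τ ⊆ Icc (-1:ℝ) 1 := by
  rintro t ⟨h1, h2⟩
  constructor
  · by_contra h
    push_neg at h
    rw [zero_of_lt_neg_one hsupp h] at h1
    linarith
  · by_contra h
    push_neg at h
    rw [Ici_zero_of_gt_one hsupp h] at h2
    linarith

lemma quantileSet_nonempty {P : Measure ℝ} [IsProbabilityMeasure P] {τ : ℝ} (hsupp : P (Set.Icc (-1:ℝ) 1)ᶜ = 0) (hτ0 : 0 < τ) (hτ1 : τ < 1) :
    (quantileSet P τ).Nonempty := by
  set T : Set ℝ := {t | τ ≤ (P (Iic t)).toReal} with hT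
  have hTne : (1:ℝ) ∈ T := by
    simp only [hT, mem_setOf_eq, Iic_one_eq hsupp]; linarith
  have hTbdd : BddBelow T := by
    refine ⟨-1, fun t ht => ?_⟩
    by_contra h
    push_neg at h
    simp only [hT, mem_setOf_eq] at ht
    rw [zero_of_lt_neg_one hsupp h] at ht
    linarith
  set c := sInf T with hc
  refine ⟨c, sInf_mem_cdf_le ⟨1, hTne⟩ hTbdd (fun x hx => hx), ?_⟩
  -- show 1 - τ ≤ P (Ici c)
  have hIio : (P (Iio c)).toReal ≤ τ := by
    have hU : Iio c = ⋃ n : ℕ, Iic (c - 1/(n+1)) := by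
      ext x
      simp only [mem_Iio, mem_iUnion, mem_Iic]
      constructor
      · intro h
        obtain ⟨n, hn⟩ := exists_nat_one_div_lt (show (0:ℝ) < c - x by linarith)
        exact ⟨n, by linarith⟩
      · rintro ⟨n, hn⟩
        have : (0:ℝ) < 1/(n+1) := by positivity
        linarith
    have htend : Tendsto (fun n : ℕ => P (Iic (c - 1/(n+1)))) atTop (𝓝 (P (Iio c))) := by
      rw [hU]
      exact tendsto_measure_iUnion_atTop (fun m n hmn => Iic_subset_Iic.2 (by
        have hmn' : (m:ℝ) ≤ n := Nat.cast_le.2 hmn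
        have : (1:ℝ)/(n+1) ≤ 1/(m+1) := by
          apply one_div_le_one_div_of_le (by positivity)
          linarith
        linarith))
    have htend' : Tendsto (fun n : ℕ => (P (Iic (c - 1/(n+1)))).toReal) atTop
        (𝓝 ((P (Iio c)).toReal)) :=
      (ENNReal.tendsto_toReal (measure_ne_top _ _)).comp htend
    refine le_of_tendsto htend' (Eventually.of_forall fun n => ?_)
    have hnotT : c - 1/(n+1) ∉ T := fun hmem => by
      have := csInf_le hTbdd hmem
      have : (0:ℝ) < 1/(n+1) := by positivity
      simp only [← hc] at *
      linarith
    simp only [hT, mem_setOf_eq, not_le] at hnotT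
    linarith
  have : (P (Ici c)).toReal = 1 - (P (Iio c)).toReal := by
    rw [← compl_Iio, compl_toReal P measurableSet_Iio]
  rw [this]
  linarith


lemma right_bound {P : Measure ℝ} [IsProbabilityMeasure P]
    (hsupp : P (Set.Icc (-1:ℝ) 1)ᶜ = 0) (τ q α b d t ε : ℝ)
    (hτ0 : 0 < τ) (hτ1 : τ < 1)
    (hd : τ ≤ (P (Iic d)).toReal)
    (ht : d + ε ≤ t) (hε : 0 < ε) (hε2 : ε ≤ 2)
    (hcase : (1 < q ∧ 0 < α ∧ α ≤ 2 ∧ 0 < b ∧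
        ∀ u ∈ Icc (0:ℝ) (min ε α), b * u^(q-1) ≤ (P (Ioo d (d+u))).toReal)
      ∨ (q = 1 ∧ α = 2 ∧ b ≤ (P (Iic d)).toReal - τ)) :
    q⁻¹ * 2^(1-q) * (b * α^(q-1)) * ε^q ≤ innerRisk P τ t - innerRisk P τ d := by
  have hdt : d ≤ t := by linarith
  rw [risk_diff_s11 hsupp τ d t hdt]
  have hint_nonneg : 0 ≤ ∫ y in Ioi d, max (t - y) 0 ∂P :=
    integral_nonneg fun y => le_max_right _ _
  rcases hcase with ⟨hq1, hα0, hα2, hb, hmass⟩ | ⟨hq1, hα2, hbF⟩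
  · have h1 : 0 ≤ (t - d) * ((P (Iic d)).toReal - τ) :=
      mul_nonneg (by linarith) (by linarith)
    have h2 := tail_bound hsupp d t ε α b q hq1 hb hα0 hα2 hε hε2 ht hmass
    linarith
  · subst hq1 hα2
    have hLHS : (1:ℝ)⁻¹ * 2^((1:ℝ)-1) * (b * (2:ℝ)^((1:ℝ)-1)) * ε^(1:ℝ) = b * ε := by
      norm_num [Real.rpow_one]
    rw [hLHS]
    rcases le_or_gt b 0 with hb0 | hb0
    · have : b * ε ≤ 0 := mul_nonpos_of_nonpos_of_nonneg hb0 (le_of_lt hε)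
      have h1 : 0 ≤ (t - d) * ((P (Iic d)).toReal - τ) :=
        mul_nonneg (by linarith) (by linarith)
      linarith
    · have h1 : b * ε ≤ (t - d) * ((P (Iic d)).toReal - τ) := by
        nlinarith
      linarith

lemma pinball_reflect (τ y t : ℝ) : pinball (1-τ) (-y) (-t) = pinball τ y t := by
  unfold pinball
  rcases lt_trichotomy y t with h | h | h
  · rw [if_neg (by intro h'; simp at h'; linarith), if_pos h]; ring
  · subst h
    rw [if_neg (by simp), if_neg (by simp)]; ring
  · rw [if_pos (by simpa using h), if_neg (by linarith)]; ring

lemma innerRisk_map_neg (P : Measure ℝ) [IsProbabilityMeasure P] (τ t : ℝ) :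
    innerRisk (P.map Neg.neg) (1-τ) (-t) = innerRisk P τ t := by
  rw [innerRisk, integral_map measurable_neg.aemeasurable
    (pinball_meas (1-τ) (-t)).aestronglyMeasurable]
  rw [innerRisk]
  apply integral_congr_ae (ae_of_all _ fun y => ?_)
  exact pinball_reflect τ y t

lemma map_neg_apply (P : Measure ℝ) (s : Set ℝ) (hs : MeasurableSet s) :
    P.map Neg.neg s = P ((fun y : ℝ => -y) ⁻¹' s) :=
  Measure.map_apply measurable_neg hs

lemma Iic_split (P : Measure ℝ) [IsProbabilityMeasure P] (x : ℝ) :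
    (P (Iic x)).toReal = (P (Iio x)).toReal + (P {x}).toReal := by
  have hu : Iio x ∪ {x} = Iic x := by
    ext y
    simp [mem_Iic, le_iff_lt_or_eq]
  have hd : Disjoint (Iio x) {x} := by
    rw [disjoint_singleton_right]
    simp
  have := measure_union (μ := P) hd (measurableSet_singleton x)
  rw [hu] at this
  rw [this, ENNReal.toReal_add (measure_ne_top _ _) (measure_ne_top _ _)]

lemma Ici_split (P : Measure ℝ) [IsProbabilityMeasure P] (x : ℝ) :
    (P (Ici x)).toReal = (P {x}).toReal + (P (Ioi x)).toReal := by
  have hu : {x} ∪ Ioi x = Ici x := by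
    ext y
    simp [mem_Ici, le_iff_eq_or_lt, eq_comm]
  have hd : Disjoint ({x} : Set ℝ) (Ioi x) := by
    rw [disjoint_singleton_left]
    simp
  have := measure_union (μ := P) hd measurableSet_Ioi
  rw [hu] at this
  rw [this, ENNReal.toReal_add (measure_ne_top _ _) (measure_ne_top _ _)]

/-- Lower bound on the self-calibration function of the pinball loss for distributions with
τ-quantile of type `q`: every `t` at distance at least `ε` from the quantile interval has excess
inner risk at least `q⁻¹·2^(1−q)·γ_Q·ε^q`. -/
theorem stmt11 (τ q α b : ℝ) (hτ : τ ∈ Set.Ioo (0:ℝ) 1) (Q : Measure ℝ)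
    [IsProbabilityMeasure Q] (hsupp : Q (Set.Icc (-1:ℝ) 1)ᶜ = 0)
    (hq : 1 ≤ q) (htype : quantileTypeQ Q τ q α b) :
    ∀ ε ∈ Set.Icc (0:ℝ) 2, ∀ t : ℝ,
      ε ≤ Metric.infDist t (Set.Icc (tqmin Q τ) (tqmax Q τ)) →
      q⁻¹ * 2 ^ (1 - q) * (b * α ^ (q - 1)) * ε ^ q
        ≤ innerRisk Q τ t - (⨅ s : ℝ, innerRisk Q τ s) := by

  obtain ⟨hτ0, hτ1⟩ := hτ
  intro ε hεI t ht
  obtain ⟨hε0, hε2⟩ := hεI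
  have hSne : (quantileSet Q τ).Nonempty := quantileSet_nonempty hsupp hτ0 hτ1
  have hSsub : quantileSet Q τ ⊆ Icc (-1:ℝ) 1 := quantileSet_subset hsupp hτ0 hτ1
  have hbddb : BddBelow (quantileSet Q τ) := ⟨-1, fun x hx => (hSsub hx).1⟩
  have hbdda : BddAbove (quantileSet Q τ) := ⟨1, fun x hx => (hSsub hx).2⟩
  have hcS : tqmin Q τ ∈ quantileSet Q τ := by
    refine ⟨sInf_mem_cdf_le hSne hbddb (fun x hx => hx.1), ?_⟩
    obtain ⟨x, hx⟩ := hSne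
    exact le_trans hx.2 (tR_mono Q (Ici_subset_Ici.2 (csInf_le hbddb hx)))
  have hdS : tqmax Q τ ∈ quantileSet Q τ := by
    refine ⟨?_, sSup_mem_cdf_ge hSne hbdda (fun x hx => hx.2)⟩
    obtain ⟨x, hx⟩ := hSne
    exact le_trans hx.1 (tR_mono Q (Iic_subset_Iic.2 (le_csSup hbdda hx)))
  set c := tqmin Q τ with hcdef
  set d := tqmax Q τ with hddef
  have hcd : c ≤ d := csInf_le_csSup hSne hbddb hbdda
  have hbddR : BddBelow (Set.range fun s => innerRisk Q τ s) := by
    refine ⟨0, ?_⟩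
    rintro _ ⟨s, rfl⟩
    exact integral_nonneg fun y => pinball_nonneg (le_of_lt hτ0) (le_of_lt hτ1) y s
  rcases eq_or_lt_of_le hε0 with hε0' | hε0'
  · rw [← hε0', Real.zero_rpow (by linarith), mul_zero]
    have := ciInf_le hbddR t
    linarith
  · have htmem : t ∉ Icc c d := fun hmem => by
      rw [Metric.infDist_zero_of_mem hmem] at ht; linarith
    rw [mem_Icc, not_and_or, not_le, not_le] at htmem
    rcases htmem with hlt | hgt
    · -- left side: t < c, use reflection
      have hdist : ε ≤ c - t := by
        have h1 : Metric.infDist t (Icc c d) ≤ dist t c :=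
          Metric.infDist_le_dist_of_mem (mem_Icc.2 ⟨le_refl c, hcd⟩)
        rw [Real.dist_eq, abs_of_nonpos (by linarith)] at h1
        linarith
      set P' := Q.map (Neg.neg : ℝ → ℝ) with hP'def
      haveI : IsProbabilityMeasure P' := Measure.isProbabilityMeasure_map measurable_neg.aemeasurable
      have hsupp' : P' (Icc (-1:ℝ) 1)ᶜ = 0 := by
        rw [hP'def, map_neg_apply _ _ (measurableSet_Icc.compl)]
        have hpre : (fun y : ℝ => -y) ⁻¹' (Icc (-1:ℝ) 1)ᶜ = (Icc (-1:ℝ) 1)ᶜ := by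
          ext y
          simp only [mem_preimage, mem_compl_iff, mem_Icc]
          constructor <;> (intro h h'; exact h ⟨by linarith [h'.1, h'.2], by linarith [h'.1, h'.2]⟩)
        rw [hpre, hsupp]
      have hIic' : ∀ x : ℝ, P' (Iic (-x)) = Q (Ici x) := fun x => by
        rw [hP'def, map_neg_apply _ _ measurableSet_Iic]
        congr 1
        ext y
        simp only [mem_preimage, mem_Iic, mem_Ici, neg_le_neg_iff]
      have hIoo' : ∀ u : ℝ, P' (Ioo (-c) (-c+u)) = Q (Ioo (c-u) c) := fun u => by
        rw [hP'def, map_neg_apply _ _ measurableSet_Ioo]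
        congr 1
        ext y
        simp only [mem_preimage, mem_Ioo]
        constructor <;> rintro ⟨h1, h2⟩ <;> constructor <;> linarith
      have hcase : (1 < q ∧ 0 < α ∧ α ≤ 2 ∧ 0 < b ∧
          ∀ u ∈ Icc (0:ℝ) (min ε α), b * u^(q-1) ≤ (P' (Ioo (-c) (-c+u))).toReal)
        ∨ (q = 1 ∧ α = 2 ∧ b ≤ (P' (Iic (-c))).toReal - (1-τ)) := by
        rcases htype with ⟨hq1, hα, hb, hmass⟩ | ⟨hq1, hα2, hc1, hd1, hbdef⟩
        · refine Or.inl ⟨hq1, hα.1, hα.2, hb, fun u hu => ?_⟩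
          rw [hIoo' u]
          exact (hmass u ⟨hu.1, le_trans hu.2 (min_le_right ε α)⟩).1
        · refine Or.inr ⟨hq1, hα2, ?_⟩
          rw [hIic' c]
          by_cases hne : c = d
          · rw [hbdef, if_neg (by rw [← hcdef, ← hddef]; simpa using hne)]
            have h1 : (Q (Ici c)).toReal = 1 - (Q (Iio c)).toReal := by
              rw [← compl_Iio, compl_toReal Q measurableSet_Iio]
            have h2 := min_le_left (τ - (Q (Iio c)).toReal) ((Q (Iic d)).toReal - τ)
            rw [← hcdef, ← hddef] at *
            linarith
          · rw [hbdef, if_pos (by rw [← hcdef, ← hddef]; simpa using hne)]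
            have hsplit : (Q (Ici c)).toReal = (Q {c}).toReal + (Q (Ioi c)).toReal :=
              Ici_split Q c
            have h1τ : 1 - τ ≤ (Q (Ioi c)).toReal := by
              refine le_trans hdS.2 (tR_mono Q ?_)
              have : c < d := lt_of_le_of_ne hcd hne
              exact fun y hy => lt_of_lt_of_le this hy
            have h2 := min_le_left (Q {c}).toReal (Q {d}).toReal
            rw [← hcdef, ← hddef] at *
            linarith
      have key := right_bound hsupp' (1-τ) q α b (-c) (-t) ε
        (by linarith) (by linarith)
        (by rw [hIic' c]; exact hcS.2)
        (by linarith) hε0' hε2 hcase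
      rw [hP'def, innerRisk_map_neg, innerRisk_map_neg] at key
      have hinf := ciInf_le hbddR c
      linarith
    · -- right side: d < t
      have hdist : ε ≤ t - d := by
        have h1 : Metric.infDist t (Icc c d) ≤ dist t d :=
          Metric.infDist_le_dist_of_mem (mem_Icc.2 ⟨hcd, le_refl d⟩)
        rw [Real.dist_eq, abs_of_nonneg (by linarith)] at h1
        linarith
      have hcase : (1 < q ∧ 0 < α ∧ α ≤ 2 ∧ 0 < b ∧
          ∀ u ∈ Icc (0:ℝ) (min ε α), b * u^(q-1) ≤ (Q (Ioo d (d+u))).toReal)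
        ∨ (q = 1 ∧ α = 2 ∧ b ≤ (Q (Iic d)).toReal - τ) := by
        rcases htype with ⟨hq1, hα, hb, hmass⟩ | ⟨hq1, hα2, hc1, hd1, hbdef⟩
        · refine Or.inl ⟨hq1, hα.1, hα.2, hb, fun u hu => ?_⟩
          exact (hmass u ⟨hu.1, le_trans hu.2 (min_le_right ε α)⟩).2
        · refine Or.inr ⟨hq1, hα2, ?_⟩
          by_cases hne : c = d
          · rw [hbdef, if_neg (by rw [← hcdef, ← hddef]; simpa using hne)]
            have h2 := min_le_right (τ - (Q (Iio c)).toReal) ((Q (Iic d)).toReal - τ)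
            rw [← hcdef, ← hddef] at *
            linarith
          · rw [hbdef, if_pos (by rw [← hcdef, ← hddef]; simpa using hne)]
            have hsplit : (Q (Iic d)).toReal = (Q (Iio d)).toReal + (Q {d}).toReal :=
              Iic_split Q d
            have h1τ : τ ≤ (Q (Iio d)).toReal := by
              refine le_trans hcS.1 (tR_mono Q ?_)
              have : c < d := lt_of_le_of_ne hcd hne
              exact fun y hy => lt_of_le_of_lt hy this
            have h2 := min_le_right (Q {c}).toReal (Q {d}).toReal
            rw [← hcdef, ← hddef] at *
            linarith
      have key := right_bound hsupp τ q α b d t ε hτ0 hτ1 hdS.1 (by linarith) hε0' hε2 hcase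
      have hinf := ciInf_le hbddR d
      linarith
end
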